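/- Every comeager subset of Baire space contains the body of a Miller tree: if Y ⊆ ω^ω is comeager (its complement is meager), then there exists a Miller tree T with [T] ⊆ Y. -/

import Mathlib

/-- `T` is a tree of finite sequences of natural numbers: closed under initial segments. -/
def IsTreeN (T : Set (List ℕ)) : Prop :=
  ∀ t ∈ T, ∀ k : ℕ, t.take k ∈ T

/-- The set of immediate successors of `t` in `T`. -/
def succs (T : Set (List ℕ)) (t : List ℕ) : Set ℕ :=
  { k | t ++ [k] ∈ T }

/-- `t` is a splitting node of `T`: it lies in `T` and has at least two
immediate successors in `T`. -/
def SplitNodeN (T : Set (List ℕ)) (t : List ℕ) : Prop :=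
  t ∈ T ∧ ∃ k l : ℕ, k ≠ l ∧ k ∈ succs T t ∧ l ∈ succs T t

/-- `T` is a Miller (superperfect) tree: a nonempty tree in which every node
extends to a splitting node, and every splitting node has infinitely many
immediate successors. -/
def IsMiller (T : Set (List ℕ)) : Prop :=
  IsTreeN T ∧ T.Nonempty ∧ (∀ t ∈ T, ∃ s, t <+: s ∧ SplitNodeN T s) ∧
  (∀ t : List ℕ, SplitNodeN T t → (succs T t).Infinite)

/-- The body `[T]` of a tree: all infinite branches whose finite initial
segments all lie in `T`. -/
def bodyN (T : Set (List ℕ)) : Set (ℕ → ℕ) :=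
  { x | ∀ n : ℕ, (List.ofFn fun i : Fin n => x i) ∈ T }

/-- `X ⊆ ω^ω` is Miller measurable: inside every Miller tree there is a Miller
subtree whose body is contained in `X` or disjoint from `X`. -/
def MillerMeasurable (X : Set (ℕ → ℕ)) : Prop :=
  ∀ T : Set (List ℕ), IsMiller T →
    ∃ T' : Set (List ℕ), IsMiller T' ∧ T' ⊆ T ∧ (bodyN T' ⊆ X ∨ bodyN T' ∩ X = ∅)

/-- A family of subsets of Baire space is topologically reasonable if it is closed
under continuous preimages and under intersections with closed sets. -/
def TopReasonableN (Θ : Set (Set (ℕ → ℕ))) : Prop :=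
  (∀ X ∈ Θ, ∀ f : (ℕ → ℕ) → (ℕ → ℕ), Continuous f → f ⁻¹' X ∈ Θ) ∧
  (∀ X ∈ Θ, ∀ C : Set (ℕ → ℕ), IsClosed C → X ∩ C ∈ Θ)



open Set

/-- initial segment of `x` of length `n` as a list -/
def segN (x : ℕ → ℕ) (n : ℕ) : List ℕ := List.ofFn fun i : Fin n => x i

lemma segN_length (x : ℕ → ℕ) (n : ℕ) : (segN x n).length = n := by
  simp [segN]

lemma segN_succ (x : ℕ → ℕ) (n : ℕ) : segN x (n+1) = segN x n ++ [x n] := by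
  rw [segN, List.ofFn_succ']
  simp [segN, List.concat_eq_append]

lemma segN_prefix (x : ℕ → ℕ) {m n : ℕ} (h : m ≤ n) : segN x m <+: segN x n := by
  induction n with
  | zero => simp_all [Nat.le_zero.mp h]
  | succ n ih =>
    rcases Nat.lt_or_ge m (n+1) with h' | h'
    · exact (ih (Nat.lt_succ_iff.mp h')).trans (by rw [segN_succ]; exact List.prefix_append _ _)
    · have : m = n+1 := le_antisymm h h'
      subst this; exact List.prefix_refl _

lemma segN_eq_iff {x : ℕ → ℕ} {t : List ℕ} :
    segN x t.length = t ↔ ∀ i : Fin t.length, x i = t.get i := by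
  constructor
  · intro h i
    have h1 : (segN x t.length)[(i : ℕ)]? = t[(i : ℕ)]? := by rw [h]
    rw [List.getElem?_eq_getElem (by simp [segN_length]), List.getElem?_eq_getElem i.isLt] at h1
    simpa [segN] using h1
  · intro h
    apply List.ext_get (by simp [segN_length])
    intro i h1 h2
    simpa [segN] using h ⟨i, h2⟩

lemma exists_good_ext (U : Set (ℕ → ℕ)) (hU : IsOpen U) (hD : Dense U) (t : List ℕ) :
    ∃ t' : List ℕ, t <+: t' ∧ ∀ x : ℕ → ℕ, segN x t'.length = t' → x ∈ U := by
  classical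
  set x₀ : ℕ → ℕ := fun i => t.getD i 0 with hx₀
  have hV : IsOpen (PiNat.cylinder x₀ t.length) := PiNat.isOpen_cylinder _ _ _
  obtain ⟨y, hyV, hyU⟩ := hD.inter_open_nonempty _ hV ⟨x₀, PiNat.self_mem_cylinder _ _⟩
  obtain ⟨v, ⟨z, n, rfl⟩, hyv, hvU⟩ :=
    (PiNat.isTopologicalBasis_cylinders (fun _ : ℕ => ℕ)).exists_subset_of_mem_open hyU hU
  refine ⟨segN y (max n t.length), ?_, ?_⟩
  · have ht : segN y t.length = t := by
      apply List.ext_get (by simp [segN_length])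
      intro i h1 h2
      have := hyV i (by simpa [segN_length] using h1)
      simp only [segN, List.get_ofFn]
      simp only [hx₀] at this
      show y i = t.get ⟨i, h2⟩
      rw [this, List.getD_eq_getElem?_getD, List.getElem?_eq_getElem h2, Option.getD_some, List.get_eq_getElem]
    calc t = segN y t.length := ht.symm
      _ <+: segN y (max n t.length) := segN_prefix _ (le_max_right _ _)
  · intro x hx
    rw [segN_length] at hx
    apply hvU
    intro i hi
    have hfg : (fun j : Fin (max n t.length) => x j) = fun j : Fin (max n t.length) => y j :=
      List.ofFn_inj.mp hx
    have h1 : x i = y i := congrFun hfg ⟨i, lt_of_lt_of_le hi (le_max_left _ _)⟩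
    have h2 : y i = z i := hyv i hi
    rw [h1, h2]

/-- trichotomy for prefixes -/
lemma prefix_trichotomy : ∀ s₁ s₂ : List ℕ, s₁ <+: s₂ ∨ s₂ <+: s₁ ∨
    ∃ (u : List ℕ) (a b : ℕ), a ≠ b ∧ u ++ [a] <+: s₁ ∧ u ++ [b] <+: s₂ := by
  intro s₁
  induction s₁ with
  | nil => intro s₂; exact Or.inl List.nil_prefix
  | cons x r₁ ih =>
    intro s₂
    cases s₂ with
    | nil => exact Or.inr (Or.inl List.nil_prefix)
    | cons y r₂ =>
      by_cases hxy : x = y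
      · subst hxy
        rcases ih r₂ with h | h | ⟨u, a, b, hab, h1, h2⟩
        · exact Or.inl (List.cons_prefix_cons.mpr ⟨rfl, h⟩)
        · exact Or.inr (Or.inl (List.cons_prefix_cons.mpr ⟨rfl, h⟩))
        · exact Or.inr (Or.inr ⟨x :: u, a, b, hab,
            List.cons_prefix_cons.mpr ⟨rfl, h1⟩, List.cons_prefix_cons.mpr ⟨rfl, h2⟩⟩)
      · refine Or.inr (Or.inr ⟨[], x, y, hxy, ?_, ?_⟩) <;>
          simp [List.cons_prefix_cons]

/-- The auxiliary embedding, on reversed lists. -/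
def eAux (F : ℕ → List ℕ → List ℕ) : List ℕ → List ℕ
  | [] => F 0 []
  | k :: r => F (r.length + 1) (eAux F r ++ [k])

/-- The embedding of finite sequences into the tree. -/
def eFun (F : ℕ → List ℕ → List ℕ) (s : List ℕ) : List ℕ := eAux F s.reverse

/-- The Miller tree generated by the embedding. -/
def TGen (F : ℕ → List ℕ → List ℕ) : Set (List ℕ) := { t | ∃ s, t <+: eFun F s }

section eFun

variable {F : ℕ → List ℕ → List ℕ}

lemma eAux_mono (HF : ∀ n t, t <+: F n t) : ∀ u v : List ℕ, eAux F v <+: eAux F (u ++ v) := by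
  intro u
  induction u with
  | nil => intro v; exact List.prefix_refl _
  | cons k u ih =>
    intro v
    calc eAux F v <+: eAux F (u ++ v) := ih v
      _ <+: eAux F (u ++ v) ++ [k] := List.prefix_append _ _
      _ <+: eAux F (k :: (u ++ v)) := HF _ _
      _ = eAux F ((k :: u) ++ v) := rfl

lemma eAux_step (HF : ∀ n t, t <+: F n t) :
    ∀ u v : List ℕ, ∀ k : ℕ, eAux F v ++ [k] <+: eAux F (u ++ k :: v) := by
  intro u
  induction u with
  | nil => intro v k; exact HF _ _
  | cons m u ih =>
    intro v k
    calc eAux F v ++ [k] <+: eAux F (u ++ k :: v) := ih v k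
      _ <+: eAux F (u ++ k :: v) ++ [m] := List.prefix_append _ _
      _ <+: eAux F (m :: (u ++ k :: v)) := HF _ _
      _ = eAux F ((m :: u) ++ k :: v) := rfl

lemma eFun_mono (HF : ∀ n t, t <+: F n t) {s s' : List ℕ} (h : s <+: s') : eFun F s <+: eFun F s' := by
  obtain ⟨u, rfl⟩ := h
  rw [eFun, eFun, List.reverse_append]
  exact eAux_mono HF _ _

lemma eFun_step (HF : ∀ n t, t <+: F n t) {s s' : List ℕ} {k : ℕ} (h : s ++ [k] <+: s') :
    eFun F s ++ [k] <+: eFun F s' := by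
  obtain ⟨u, rfl⟩ := h
  rw [eFun, eFun, List.reverse_append, List.reverse_append]
  simpa using eAux_step HF u.reverse s.reverse k

lemma eFun_succ (s : List ℕ) (k : ℕ) :
    eFun F (s ++ [k]) = F (s.length + 1) (eFun F s ++ [k]) := by
  rw [eFun, List.reverse_append]
  simp [eAux, eFun]

lemma eFun_length_lt (HF : ∀ n t, t <+: F n t) {s : List ℕ} {k : ℕ} : (eFun F s).length < (eFun F (s ++ [k])).length := by
  have h := eFun_step (F := F) HF (List.prefix_refl (s ++ [k]))
  have := h.length_le
  simp only [List.length_append, List.length_singleton] at this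
  omega

end eFun

lemma prefix_eq_of_length {a b c : List ℕ} (ha : a <+: c) (hb : b <+: c)
    (h : a.length = b.length) : a = b :=
  (List.prefix_of_prefix_length_le ha hb h.le).eq_of_length h

lemma prefix_of_prefix_le {a b c : List ℕ} (ha : a <+: c) (hb : b <+: c)
    (h : a.length ≤ b.length) : a <+: b :=
  List.prefix_of_prefix_length_le ha hb h

section TGen

variable {F : ℕ → List ℕ → List ℕ}

lemma mem_TGen_of_prefix {t t' : List ℕ} (h : t <+: t') (h' : t' ∈ TGen F) : t ∈ TGen F := by
  obtain ⟨s, hs⟩ := h'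
  exact ⟨s, h.trans hs⟩

lemma eFun_mem_TGen (s : List ℕ) : eFun F s ∈ TGen F := ⟨s, List.prefix_refl _⟩

lemma succs_TGen_univ (HF : ∀ n t, t <+: F n t) (s : List ℕ) :
    succs (TGen F) (eFun F s) = Set.univ := by
  apply Set.eq_univ_of_forall
  intro k
  exact ⟨s ++ [k], eFun_step HF (List.prefix_refl _)⟩

/-- A splitting node of `TGen F` is in the image of `eFun F`. -/
lemma split_eq_eFun (HF : ∀ n t, t <+: F n t) {t : List ℕ}
    (h : SplitNodeN (TGen F) t) : ∃ s, t = eFun F s := by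
  obtain ⟨-, k, l, hkl, ⟨s₁, hk⟩, ⟨s₂, hl⟩⟩ := h
  rcases prefix_trichotomy s₁ s₂ with h12 | h12 | ⟨u, a, b, hab, h1, h2⟩
  · -- both t++[k], t++[l] prefixes of eFun F s₂
    have hk' : t ++ [k] <+: eFun F s₂ := hk.trans (eFun_mono HF h12)
    have : t ++ [k] = t ++ [l] := prefix_eq_of_length hk' hl (by simp)
    exact absurd (by simpa using this) hkl
  · have hl' : t ++ [l] <+: eFun F s₁ := hl.trans (eFun_mono HF h12)
    have : t ++ [k] = t ++ [l] := prefix_eq_of_length hk hl' (by simp)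
    exact absurd (by simpa using this) hkl
  · have ha : eFun F u ++ [a] <+: eFun F s₁ := eFun_step HF h1
    have hb : eFun F u ++ [b] <+: eFun F s₂ := eFun_step HF h2
    -- compare |t| and |eFun F u|
    rcases lt_trichotomy t.length (eFun F u).length with hlen | hlen | hlen
    · -- t++[k], t++[l] both prefixes of eFun F u
      have hk' : t ++ [k] <+: eFun F u :=
        prefix_of_prefix_le hk ((List.prefix_append _ _).trans ha) (by simp; omega)
      have hl' : t ++ [l] <+: eFun F u :=
        prefix_of_prefix_le hl ((List.prefix_append _ _).trans hb) (by simp; omega)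
      have : t ++ [k] = t ++ [l] := prefix_eq_of_length hk' hl' (by simp)
      exact absurd (by simpa using this) hkl
    · -- lengths equal: t = eFun F u
      refine ⟨u, ?_⟩
      have ht : t <+: eFun F s₁ := (List.prefix_append _ _).trans hk
      have hu : eFun F u <+: eFun F s₁ := (List.prefix_append _ _).trans ha
      exact prefix_eq_of_length ht hu hlen
    · -- eFun F u ++ [a], eFun F u ++ [b] both prefixes of t
      have ha' : eFun F u ++ [a] <+: t :=
        prefix_of_prefix_le ha ((List.prefix_append _ _).trans hk) (by simp; omega)
      have hb' : eFun F u ++ [b] <+: t :=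
        prefix_of_prefix_le hb ((List.prefix_append _ _).trans hl) (by simp; omega)
      have : eFun F u ++ [a] = eFun F u ++ [b] := prefix_eq_of_length ha' hb' (by simp)
      exact absurd (by simpa using this) hab

lemma TGen_isMiller (HF : ∀ n t, t <+: F n t) : IsMiller (TGen F) := by
  refine ⟨?_, ⟨[], [], List.nil_prefix⟩, ?_, ?_⟩
  · intro t ht k
    exact mem_TGen_of_prefix (List.take_prefix _ _) ht
  · rintro t ⟨s, hs⟩
    refine ⟨eFun F s, hs, eFun_mem_TGen s, 0, 1, by norm_num, ?_, ?_⟩ <;>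
    · rw [succs_TGen_univ HF]; trivial
  · intro t ht
    obtain ⟨s, rfl⟩ := split_eq_eFun HF ht
    rw [succs_TGen_univ HF]
    exact Set.infinite_univ

end TGen

section Body

variable {F : ℕ → List ℕ → List ℕ}

lemma eFun_form (F : ℕ → List ℕ → List ℕ) (s : List ℕ) :
    ∃ t₀ : List ℕ, eFun F s = F s.length t₀ := by
  rcases s.eq_nil_or_concat with rfl | ⟨r, k, rfl⟩
  · exact ⟨[], rfl⟩
  · rw [List.concat_eq_append, eFun_succ]
    exact ⟨eFun F r ++ [k], by simp⟩

lemma seg_eFun (HF : ∀ n t, t <+: F n t) {x : ℕ → ℕ} (hx : x ∈ bodyN (TGen F)) :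
    ∀ m : ℕ, ∃ s : List ℕ, s.length = m ∧ segN x (eFun F s).length = eFun F s := by
  have hx' : ∀ n : ℕ, segN x n ∈ TGen F := hx
  intro m
  induction m with
  | zero =>
    refine ⟨[], rfl, ?_⟩
    obtain ⟨s', hs'⟩ := hx' (eFun F []).length
    exact prefix_eq_of_length hs' (eFun_mono HF (List.nil_prefix)) (by simp [segN_length])
  | succ m ih =>
    obtain ⟨s, hm, hseg⟩ := ih
    set k := x (eFun F s).length with hk
    have h1 : segN x ((eFun F s).length + 1) = eFun F s ++ [k] := by
      rw [segN_succ, hseg]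
    obtain ⟨r, hr⟩ := hx' (eFun F (s ++ [k])).length
    have hlen : (eFun F s).length + 1 ≤ (eFun F (s ++ [k])).length := eFun_length_lt HF
    have h2 : eFun F s ++ [k] <+: eFun F r := by
      rw [← h1]
      exact (segN_prefix x hlen).trans hr
    have hstep : eFun F (s ++ [k]) <+: eFun F r := by
      rcases prefix_trichotomy s r with hsr | hsr | ⟨u, a, b, hab, hu1, hu2⟩
      · obtain ⟨u, rfl⟩ := hsr
        rcases u with - | ⟨c, u'⟩
        · exfalso
          have hle := h2.length_le
          simp at hle
        · have hc : eFun F s ++ [c] <+: eFun F (s ++ c :: u') :=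
            eFun_step HF ⟨u', by simp⟩
          have : eFun F s ++ [k] = eFun F s ++ [c] :=
            prefix_eq_of_length h2 hc (by simp)
          have hkc : k = c := by simpa using this
          exact eFun_mono HF ⟨u', by simp [hkc]⟩
      · exfalso
        have hle := h2.length_le
        have hle' := (eFun_mono HF hsr).length_le
        simp at hle
        omega
      · exfalso
        have ha : eFun F u ++ [a] <+: eFun F r :=
          (eFun_step HF hu1).trans (((List.prefix_append _ [k]).trans h2))
        have hb : eFun F u ++ [b] <+: eFun F r := eFun_step HF hu2
        have : eFun F u ++ [a] = eFun F u ++ [b] := prefix_eq_of_length ha hb (by simp)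
        exact hab (by simpa using this)
    refine ⟨s ++ [k], by simp [hm], ?_⟩
    exact prefix_eq_of_length hr hstep (by simp [segN_length])

end Body

/-- Every comeager subset of Baire space contains the body of a Miller tree. -/
theorem comeager_contains_miller_body (Y : Set (ℕ → ℕ)) (hY : IsMeagre Yᶜ) :
    ∃ T : Set (List ℕ), IsMiller T ∧ bodyN T ⊆ Y := by
  classical
  have hres : Y ∈ residual (ℕ → ℕ) := by
    rw [IsMeagre, compl_compl] at hY
    exact hY
  obtain ⟨S, hSo, hSd, hSc, hSsub⟩ := mem_residual_iff.mp hres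
  obtain ⟨U, hU⟩ := (hSc.insert Set.univ).exists_eq_range (Set.insert_nonempty _ _)
  have hmem : ∀ n : ℕ, U n ∈ insert Set.univ S := by
    intro n
    rw [hU]
    exact Set.mem_range_self n
  have hUo : ∀ n : ℕ, IsOpen (U n) := by
    intro n
    rcases hmem n with h | h
    · rw [h]; exact isOpen_univ
    · exact hSo _ h
  have hUd : ∀ n : ℕ, Dense (U n) := by
    intro n
    rcases hmem n with h | h
    · rw [h]; exact dense_univ
    · exact hSd _ h
  have hsub : ∀ x : ℕ → ℕ, (∀ n : ℕ, x ∈ U n) → x ∈ Y := by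
    intro x hx
    apply hSsub
    intro t ht
    have : t ∈ insert Set.univ S := Set.mem_insert_of_mem _ ht
    rw [hU] at this
    obtain ⟨n, rfl⟩ := this
    exact hx n
  choose F hF1 hF2 using fun n t => exists_good_ext (U n) (hUo n) (hUd n) t
  refine ⟨TGen F, TGen_isMiller hF1, ?_⟩
  intro x hx
  apply hsub
  intro m
  obtain ⟨s, hm, hseg⟩ := seg_eFun hF1 hx m
  obtain ⟨t₀, ht₀⟩ := eFun_form F s
  apply hF2 m t₀
  rw [← hm, ← ht₀]
  exact hseg
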